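/- Simpson limit of the Filon–Simpson coefficients: with z ∈ ℂ \ {0} and Δt > 0, define q₁(z) = Δt(−z e^{−2z} − 2e^{−2z} + 2z² − 3z + 2)/(2z³), q₂(z) = Δt(2z e^{−2z} + 2e^{−2z} + 2z − 2)/z³, q₃(z) = Δt(−2z² e^{−2z} − 3z e^{−2z} − 2e^{−2z} − z + 2)/(2z³). Then as z → 0 one has q₁(z) → Δt/3, q₂(z) → 4Δt/3, and q₃(z) → Δt/3 (the classical Simpson weights). -/

import Mathlib

open Filter

lemma filon_aux_R_tendsto :
    Tendsto (fun z : ℂ => (Complex.exp (-2 * z) - 1 + 2 * z - 2 * z ^ 2) / z ^ 3)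
      (nhdsWithin 0 {(0 : ℂ)}ᶜ) (nhds (-4/3 : ℂ)) := by
  rw [tendsto_iff_norm_sub_tendsto_zero]
  apply squeeze_zero_norm' (a := fun z : ℂ => ‖z‖)
  · filter_upwards [self_mem_nhdsWithin,
      inter_mem_nhdsWithin {(0:ℂ)}ᶜ (Metric.ball_mem_nhds (0:ℂ) (by norm_num : (0:ℝ) < 1/2))]
      with z hz hz2
    have hzne : z ≠ 0 := hz
    have hzlt : ‖z‖ < 1/2 := by
      simpa [Complex.dist_eq] using hz2.2
    have hab0 : (0:ℝ) ≤ ‖z‖ := norm_nonneg z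
    have habs2 : ‖-2 * z‖ = 2 * ‖z‖ := by
      rw [norm_mul, norm_neg]
      norm_num
    have habs : ‖-2 * z‖ ≤ 1 := by rw [habs2]; linarith
    have hb := Complex.exp_bound habs (by norm_num : 0 < 4)
    have hsum : (∑ m ∈ Finset.range 4, (-2 * z) ^ m / (m.factorial : ℂ))
        = 1 - 2 * z + 2 * z ^ 2 - 4/3 * z ^ 3 := by
      simp [Finset.sum_range_succ, Nat.factorial]
      ring
    rw [hsum, habs2] at hb
    have heq : (Complex.exp (-2 * z) - 1 + 2 * z - 2 * z ^ 2) / z ^ 3 - (-4/3)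
        = (Complex.exp (-2 * z) - (1 - 2 * z + 2 * z ^ 2 - 4/3 * z ^ 3)) / z ^ 3 := by
      field_simp
      ring
    rw [Real.norm_eq_abs, _root_.abs_of_nonneg (norm_nonneg _),
      heq, norm_div, norm_pow]
    have hz3 : (0:ℝ) < ‖z‖ ^ 3 := by
      have : (0:ℝ) < ‖z‖ := norm_pos_iff.mpr hzne
      positivity
    rw [div_le_iff₀ hz3]
    calc ‖Complex.exp (-2 * z) - (1 - 2 * z + 2 * z ^ 2 - 4/3 * z ^ 3)‖
        ≤ (2 * ‖z‖) ^ 4 * ((Nat.succ 4 : ℝ) * ((Nat.factorial 4 : ℝ) * 4)⁻¹) := hb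
      _ = ‖z‖ ^ 4 * (5/6) := by
          norm_num [Nat.factorial]
          ring
      _ ≤ ‖z‖ * ‖z‖ ^ 3 := by
          nlinarith [pow_nonneg hab0 3, pow_nonneg hab0 4]
  · have : Tendsto (fun z : ℂ => z) (nhdsWithin 0 {(0:ℂ)}ᶜ) (nhds 0) :=
      tendsto_id.mono_left nhdsWithin_le_nhds
    simpa using this.norm

/-- Simpson limit of the Filon–Simpson coefficients as `z → 0`. -/
theorem filon_simpson_coeffs_simpson_limit (Δt : ℝ) (hΔt : 0 < Δt) :
    Tendsto (fun z : ℂ => (Δt : ℂ) * (-z * Complex.exp (-2 * z) - 2 * Complex.exp (-2 * z)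
        + 2 * z ^ 2 - 3 * z + 2) / (2 * z ^ 3))
      (nhdsWithin 0 {(0 : ℂ)}ᶜ) (nhds ((Δt : ℂ) / 3)) ∧
    Tendsto (fun z : ℂ => (Δt : ℂ) * (2 * z * Complex.exp (-2 * z) + 2 * Complex.exp (-2 * z)
        + 2 * z - 2) / z ^ 3)
      (nhdsWithin 0 {(0 : ℂ)}ᶜ) (nhds (4 * (Δt : ℂ) / 3)) ∧
    Tendsto (fun z : ℂ => (Δt : ℂ) * (-2 * z ^ 2 * Complex.exp (-2 * z)
        - 3 * z * Complex.exp (-2 * z) - 2 * Complex.exp (-2 * z) - z + 2) / (2 * z ^ 3))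
      (nhdsWithin 0 {(0 : ℂ)}ᶜ) (nhds ((Δt : ℂ) / 3)) := by
  have hR := filon_aux_R_tendsto
  have hz : Tendsto (fun z : ℂ => z) (nhdsWithin 0 {(0:ℂ)}ᶜ) (nhds 0) :=
    tendsto_id.mono_left nhdsWithin_le_nhds
  refine ⟨?_, ?_, ?_⟩
  · have h1 : Tendsto (fun z : ℂ => (Δt : ℂ) * (-1 + (-z - 2) *
        ((Complex.exp (-2 * z) - 1 + 2 * z - 2 * z ^ 2) / z ^ 3) / 2))
        (nhdsWithin 0 {(0:ℂ)}ᶜ) (nhds ((Δt : ℂ) * (-1 + (-(0:ℂ) - 2) * (-4/3) / 2))) :=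
      tendsto_const_nhds.mul (tendsto_const_nhds.add
        (((hz.neg.sub tendsto_const_nhds).mul hR).div_const 2))
    have hval : (Δt : ℂ) * (-1 + (-(0:ℂ) - 2) * (-4/3) / 2) = (Δt : ℂ) / 3 := by ring
    rw [hval] at h1
    refine h1.congr' ?_
    filter_upwards [self_mem_nhdsWithin] with z hz0
    have hz0 : z ≠ 0 := hz0
    set E := Complex.exp (-2 * z) with hE
    conv_rhs => rw [mul_div_assoc]
    congr 1
    rw [eq_div_iff (mul_ne_zero two_ne_zero (pow_ne_zero 3 hz0))]
    field_simp
    ring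
  · have h1 : Tendsto (fun z : ℂ => (Δt : ℂ) * (4 + (2 * z + 2) *
        ((Complex.exp (-2 * z) - 1 + 2 * z - 2 * z ^ 2) / z ^ 3)))
        (nhdsWithin 0 {(0:ℂ)}ᶜ) (nhds ((Δt : ℂ) * (4 + (2 * (0:ℂ) + 2) * (-4/3)))) :=
      tendsto_const_nhds.mul (tendsto_const_nhds.add
        (((hz.const_mul 2).add tendsto_const_nhds).mul hR))
    have hval : (Δt : ℂ) * (4 + (2 * (0:ℂ) + 2) * (-4/3)) = 4 * (Δt : ℂ) / 3 := by ring
    rw [hval] at h1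
    refine h1.congr' ?_
    filter_upwards [self_mem_nhdsWithin] with z hz0
    have hz0 : z ≠ 0 := hz0
    set E := Complex.exp (-2 * z) with hE
    conv_rhs => rw [mul_div_assoc]
    congr 1
    rw [eq_div_iff (pow_ne_zero 3 hz0)]
    field_simp
    ring
  · have h1 : Tendsto (fun z : ℂ => (Δt : ℂ) * (-2 - 4 * z + (-2 * z ^ 2 - 3 * z - 2) *
        ((Complex.exp (-2 * z) - 1 + 2 * z - 2 * z ^ 2) / z ^ 3)) / 2)
        (nhdsWithin 0 {(0:ℂ)}ᶜ)
        (nhds ((Δt : ℂ) * (-2 - 4 * (0:ℂ) + (-2 * (0:ℂ) ^ 2 - 3 * 0 - 2) * (-4/3)) / 2)) := by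
      have hpoly : Tendsto (fun z : ℂ => -2 * z ^ 2 - 3 * z - 2)
          (nhdsWithin 0 {(0:ℂ)}ᶜ) (nhds (-2 * (0:ℂ) ^ 2 - 3 * 0 - 2)) :=
        (((hz.pow 2).const_mul (-2)).sub (hz.const_mul 3)).sub tendsto_const_nhds
      exact (tendsto_const_nhds.mul ((tendsto_const_nhds.sub (hz.const_mul 4)).add
        (hpoly.mul hR))).div_const 2
    have hval : (Δt : ℂ) * (-2 - 4 * (0:ℂ) + (-2 * (0:ℂ) ^ 2 - 3 * 0 - 2) * (-4/3)) / 2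
        = (Δt : ℂ) / 3 := by ring
    rw [hval] at h1
    refine h1.congr' ?_
    filter_upwards [self_mem_nhdsWithin] with z hz0
    have hz0 : z ≠ 0 := hz0
    set E := Complex.exp (-2 * z) with hE
    rw [div_eq_div_iff two_ne_zero (mul_ne_zero two_ne_zero (pow_ne_zero 3 hz0))]
    field_simp
    ring
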